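/- For any non-decreasing price curve p:[N]→[0,1] and m buyer types with non-decreasing valuation curves v_i:[N]→[0,1], there exists a non-decreasing step function p̄:[N]→[0,1] with at most m jumps (points n where p̄(n+1)>p̄(n)) such that for every distribution q over the m types, the expected revenue under p̄ is at least the expected revenue under p, where a type-i buyer purchases n_{i,p} = max(argmax_n (v_i(n)-p(n))) if max utility is nonnegative and 0 otherwise, and revenue from type i is p(n_{i,p}). -/

import Mathlib

open Classical in
/-- The amount of data a buyer with valuation `v` purchases at price curve `p`:
`0` if `v n < p n` for all `n ∈ {1,…,N}`, else the largest utility maximizer in `{1,…,N}`. -/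
noncomputable def buy (N : ℕ) (v p : ℕ → ℝ) : ℕ :=
  if ∀ n ∈ Finset.Icc 1 N, v n < p n then 0
  else WithBot.unbotD 0 (((Finset.Icc 1 N).filter
      (fun n => ∀ k ∈ Finset.Icc 1 N, v k - p k ≤ v n - p n)).max)

/-- Expected revenue of price curve `p` under type distribution `q`. -/
noncomputable def rev (N m : ℕ) (v : Fin m → ℕ → ℝ) (q : Fin m → ℝ) (p : ℕ → ℝ) : ℝ :=
  ∑ i, q i * p (buy N (v i) p)

open Classical in
lemma buy_spec (N : ℕ) (v p : ℕ → ℝ)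
    (h : ¬ ∀ n ∈ Finset.Icc 1 N, v n < p n) :
    buy N v p ∈ (Finset.Icc 1 N).filter
      (fun n => ∀ k ∈ Finset.Icc 1 N, v k - p k ≤ v n - p n) ∧
    ∀ n ∈ (Finset.Icc 1 N).filter
      (fun n => ∀ k ∈ Finset.Icc 1 N, v k - p k ≤ v n - p n), n ≤ buy N v p := by
  have h' := h
  push_neg at h'
  obtain ⟨n₀, hn₀, hvp⟩ := h'
  have hne : ((Finset.Icc 1 N).filter
      (fun n => ∀ k ∈ Finset.Icc 1 N, v k - p k ≤ v n - p n)).Nonempty := by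
    obtain ⟨b, hb, hmax⟩ := Finset.exists_max_image (Finset.Icc 1 N)
      (fun n => v n - p n) ⟨n₀, hn₀⟩
    refine ⟨b, ?_⟩
    simp only [Finset.mem_filter]
    exact ⟨hb, hmax⟩
  obtain ⟨a, ha⟩ := Finset.max_of_nonempty hne
  have hbuy : buy N v p = a := by
    rw [buy, if_neg h, ha]
    rfl
  constructor
  · rw [hbuy]; exact Finset.mem_of_max ha
  · intro n hn; rw [hbuy]
    have := Finset.le_max hn
    rw [ha] at this
    exact_mod_cast this

lemma buy_le (N : ℕ) (v p : ℕ → ℝ) : buy N v p ≤ N := by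
  by_cases h : ∀ n ∈ Finset.Icc 1 N, v n < p n
  · rw [buy, if_pos h]; exact Nat.zero_le N
  · have := (buy_spec N v p h).1
    simp only [Finset.mem_filter, Finset.mem_Icc] at this
    exact this.1.2

/-- for any non-decreasing price curve there is a non-decreasing
price curve with at most `m` jumps yielding at least as much revenue for every
type distribution. -/
theorem mstep_exists (N m : ℕ)
    (v : Fin m → ℕ → ℝ)
    (hvmono : ∀ i, ∀ a b : ℕ, a ≤ b → b ≤ N → v i a ≤ v i b)
    (hv0 : ∀ i, v i 0 = 0)
    (hvb : ∀ i, ∀ n ≤ N, v i n ∈ Set.Icc (0:ℝ) 1)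
    (p : ℕ → ℝ)
    (hpmono : ∀ a b : ℕ, a ≤ b → b ≤ N → p a ≤ p b)
    (hpb : ∀ n ≤ N, p n ∈ Set.Icc (0:ℝ) 1)
    (hp0 : p 0 = 0) :
    ∃ pbar : ℕ → ℝ,
      (∀ a b : ℕ, a ≤ b → b ≤ N → pbar a ≤ pbar b) ∧
      (∀ n ≤ N, pbar n ∈ Set.Icc (0:ℝ) 1) ∧
      ((Finset.range N).filter (fun n => pbar n < pbar (n+1))).card ≤ m ∧
      ∀ q : Fin m → ℝ, (∀ i, 0 ≤ q i) → (∑ i, q i) = 1 →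
        rev N m v q p ≤ rev N m v q pbar := by
  classical
  set T : Finset ℕ := Finset.univ.image (fun i => buy N (v i) p) with hT
  have hTle : ∀ t ∈ T, t ≤ N := by
    intro t ht
    simp only [hT, Finset.mem_image, Finset.mem_univ, true_and] at ht
    obtain ⟨i, hi⟩ := ht
    exact hi ▸ buy_le N (v i) p
  set S : ℕ → Finset ℕ := fun n => T.filter (fun t => n ≤ t) with hS
  set pbar : ℕ → ℝ := fun n => if h : (S n).Nonempty then p ((S n).min' h) else 1
    with hpbar
  -- membership facts for S
  have hSsub : ∀ {a b : ℕ}, a ≤ b → S b ⊆ S a := by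
    intro a b hab
    intro t ht
    simp only [hS, Finset.mem_filter] at ht ⊢
    exact ⟨ht.1, hab.trans ht.2⟩
  have hminmem : ∀ (n : ℕ) (h : (S n).Nonempty),
      (S n).min' h ∈ T ∧ n ≤ (S n).min' h := by
    intro n h
    have := (S n).min'_mem h
    simp only [hS, Finset.mem_filter] at this
    exact this
  -- monotonicity
  have hmono : ∀ a b : ℕ, a ≤ b → pbar a ≤ pbar b := by
    intro a b hab
    by_cases hb : (S b).Nonempty
    · have ha : (S a).Nonempty := hb.mono (hSsub hab)
      rw [hpbar]
      simp only [dif_pos ha, dif_pos hb]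
      have h1 : (S a).min' ha ≤ (S b).min' hb :=
        Finset.min'_le _ _ (hSsub hab ((S b).min'_mem hb))
      exact hpmono _ _ h1 (hTle _ (hminmem b hb).1)
    · rw [hpbar]
      simp only [dif_neg hb]
      by_cases ha : (S a).Nonempty
      · simp only [dif_pos ha]
        exact (hpb _ (hTle _ (hminmem a ha).1)).2
      · simp [dif_neg ha]
  -- bounds
  have hbounds : ∀ n, pbar n ∈ Set.Icc (0:ℝ) 1 := by
    intro n
    rw [hpbar]
    by_cases h : (S n).Nonempty
    · simp only [dif_pos h]
      exact hpb _ (hTle _ (hminmem n h).1)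
    · simp only [dif_neg h]
      exact ⟨zero_le_one, le_refl 1⟩
  -- pbar dominates p on [0, N]
  have hub : ∀ n ≤ N, p n ≤ pbar n := by
    intro n hn
    rw [hpbar]
    by_cases h : (S n).Nonempty
    · simp only [dif_pos h]
      exact hpmono _ _ (hminmem n h).2 (hTle _ (hminmem n h).1)
    · simp only [dif_neg h]
      exact (hpb n hn).2
  -- pbar equals p at purchase points
  have heq : ∀ t ∈ T, pbar t = p t := by
    intro t ht
    have hne : (S t).Nonempty := ⟨t, by simp [hS, ht]⟩
    have h1 : (S t).min' hne ≤ t := Finset.min'_le _ _ (by simp [hS, ht])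
    have h2 : p ((S t).min' hne) ≤ p t := hpmono _ _ h1 (hTle t ht)
    have h3 : pbar t = p ((S t).min' hne) := by rw [hpbar]; simp [dif_pos hne]
    have h4 := hub t (hTle t ht)
    rw [h3] at h4 ⊢
    linarith
  -- jumps only at purchase points
  have hjump : ((Finset.range N).filter (fun n => pbar n < pbar (n+1))).card ≤ m := by
    have hsub : (Finset.range N).filter (fun n => pbar n < pbar (n+1)) ⊆ T := by
      intro n hn
      simp only [Finset.mem_filter] at hn
      by_contra hnT
      have hSeq : S n = S (n+1) := by
        apply Finset.ext
        intro t
        simp only [hS, Finset.mem_filter]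
        constructor
        · rintro ⟨ht, hle⟩
          refine ⟨ht, ?_⟩
          rcases Nat.lt_or_ge n t with h | h
          · exact h
          · exact absurd (le_antisymm h hle ▸ ht) hnT
        · rintro ⟨ht, hle⟩
          exact ⟨ht, (Nat.le_succ n).trans hle⟩
      have : pbar n = pbar (n+1) := by
        rw [hpbar]; simp only [hSeq]
      exact absurd this (ne_of_lt hn.2)
    calc ((Finset.range N).filter (fun n => pbar n < pbar (n+1))).card
        ≤ T.card := Finset.card_le_card hsub
      _ ≤ (Finset.univ : Finset (Fin m)).card := Finset.card_image_le
      _ = m := by simp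
  -- per-type revenue comparison
  have hrev : ∀ i : Fin m, p (buy N (v i) p) ≤ pbar (buy N (v i) pbar) := by
    intro i
    by_cases hcond : ∀ n ∈ Finset.Icc 1 N, v i n < p n
    · -- buyer buys nothing under p
      have : buy N (v i) p = 0 := by rw [buy, if_pos hcond]
      rw [this, hp0]
      exact (hbounds _).1
    · -- buyer buys nᵢ ≥ 1 under p
      obtain ⟨hmem, -⟩ := buy_spec N (v i) p hcond
      set ni := buy N (v i) p with hni
      simp only [Finset.mem_filter] at hmem
      obtain ⟨hniIcc, hmax⟩ := hmem
      have hniN : ni ≤ N := (Finset.mem_Icc.mp hniIcc).2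
      have hniT : ni ∈ T := by
        simp only [hT, Finset.mem_image]
        exact ⟨i, Finset.mem_univ i, rfl⟩
      have hpeq : pbar ni = p ni := heq ni hniT
      -- nonnegative utility at nᵢ
      push_neg at hcond
      obtain ⟨n₀, hn₀, hn₀vp⟩ := hcond
      have hu : 0 ≤ v i ni - p ni := by
        have := hmax n₀ hn₀
        linarith
      -- nᵢ is a maximizer under pbar
      have hmax' : ∀ k ∈ Finset.Icc 1 N, v i k - pbar k ≤ v i ni - pbar ni := by
        intro k hk
        have hkN : k ≤ N := (Finset.mem_Icc.mp hk).2
        have := hub k hkN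
        have := hmax k hk
        rw [hpeq]
        linarith
      have hcond' : ¬ ∀ n ∈ Finset.Icc 1 N, v i n < pbar n := by
        push_neg
        exact ⟨ni, hniIcc, by rw [hpeq]; linarith⟩
      obtain ⟨hmem', hlarge'⟩ := buy_spec N (v i) pbar hcond'
      set mi := buy N (v i) pbar with hmi
      have hmiN : mi ≤ N := by
        simp only [Finset.mem_filter, Finset.mem_Icc] at hmem'
        exact hmem'.1.2
      have hle : ni ≤ mi := by
        apply hlarge' ni
        simp only [Finset.mem_filter]
        exact ⟨hniIcc, hmax'⟩
      calc p ni = pbar ni := hpeq.symm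
        _ ≤ pbar mi := hmono ni mi hle
  refine ⟨pbar, fun a b hab _ => hmono a b hab, fun n _ => hbounds n, hjump, ?_⟩
  intro q hq hq1
  unfold rev
  apply Finset.sum_le_sum
  intro i _
  exact mul_le_mul_of_nonneg_left (hrev i) (hq i)
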